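/- If γ_M(X) ≥ 0 for every X ⊆ E(M), then Σ_{Z ∈ Z(M), Z ⊊ E(M)} γ_M(Z) ≤ |E(M)|, where the sum ranges over all cyclic flats of M properly contained in E(M). -/

import Mathlib

open Set Matroid
open scoped Classical

namespace Paper

variable {α : Type*}

/-- A circuit of a matroid: a minimal dependent set. -/
def Circuit (M : Matroid α) (C : Set α) : Prop :=
  M.Dep C ∧ ∀ D ⊂ C, M.Indep D

/-- A coloop: an element of the ground set lying in no circuit. -/
def Coloop (M : Matroid α) (x : α) : Prop :=
  x ∈ M.E ∧ ∀ C, Circuit M C → x ∉ C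

/-- The set of coloops of a matroid. -/
def coloops (M : Matroid α) : Set α := {x | Coloop M x}

/-- A cyclic set: a subset of the ground set each of whose elements lies in a
circuit contained in the set (equivalently, the restriction has no coloops). -/
def Cyclic (M : Matroid α) (X : Set α) : Prop :=
  X ⊆ M.E ∧ ∀ x ∈ X, ∃ C, Circuit M C ∧ C ⊆ X ∧ x ∈ C

/-- A cyclic flat: a cyclic set that is also a flat. -/
def CyclicFlat (M : Matroid α) (X : Set α) : Prop :=
  Cyclic M X ∧ M.IsFlat X

/-- The rank of a set: the largest cardinality of an independent subset. -/
noncomputable def rk (M : Matroid α) (X : Set α) : ℕ :=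
  sSup (Set.ncard '' {I | M.Indep I ∧ I ⊆ X})

/-- The nullity of a set: `n(X) = |X| − r(X)`. -/
noncomputable def nullity (M : Matroid α) (X : Set α) : ℤ :=
  (X.ncard : ℤ) - rk M X

/-- Deletion of a single element: `M \ e`. -/
noncomputable def deleteElem (M : Matroid α) (e : α) : Matroid α :=
  M ↾ (M.E \ {e})

variable [Fintype α] [DecidableEq α]

/-- The `γ` function: `γ_M(X) = n(X) − Σ_{Z ∈ Z(M), Z ⊊ X} γ_M(Z)`. -/
noncomputable def gamma (M : Matroid α) (X : Finset α) : ℤ :=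
  nullity M ↑X -
    ∑ Z ∈ (Finset.univ.filter (fun Z : Finset α => CyclicFlat M ↑Z ∧ Z ⊂ X)).attach,
      gamma M Z.1
termination_by X.card
decreasing_by
  exact Finset.card_lt_card (Finset.mem_filter.mp Z.2).2.2

theorem statement_2 (M : Matroid α)
    (h : ∀ X : Finset α, ↑X ⊆ M.E → 0 ≤ gamma M X) :
    ∑ Z ∈ Finset.univ.filter (fun Z : Finset α => CyclicFlat M ↑Z ∧ ↑Z ⊂ M.E), gamma M Z
      ≤ (M.E.ncard : ℤ) := by
  set F : Finset α := M.E.toFinset with hF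
  have hcoe : (↑F : Set α) = M.E := Set.coe_toFinset _
  have hg : 0 ≤ gamma M F := h F (by rw [hcoe])
  have heq : (Finset.univ.filter (fun Z : Finset α => CyclicFlat M ↑Z ∧ ↑Z ⊂ M.E))
      = (Finset.univ.filter (fun Z : Finset α => CyclicFlat M ↑Z ∧ Z ⊂ F)) := by
    apply Finset.filter_congr
    intro Z _
    rw [← hcoe, Finset.coe_ssubset]
  rw [heq]
  have hrec := gamma.eq_def M F
  rw [Finset.sum_attach _ (fun Z => gamma M Z)] at hrec
  have : ∑ Z ∈ Finset.univ.filter (fun Z : Finset α => CyclicFlat M ↑Z ∧ Z ⊂ F), gamma M Z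
      = nullity M ↑F - gamma M F := by rw [hrec]; ring
  rw [this]
  have hnull : nullity M ↑F ≤ (M.E.ncard : ℤ) := by
    unfold nullity
    rw [hcoe]
    have : (0:ℤ) ≤ (rk M M.E : ℤ) := Int.ofNat_nonneg _
    linarith
  linarith

end Paper
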